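/- For every ideal I of R, the set V_S(I) is a quasi-compact subset of Spec_S R with respect to the S-flat topology; that is, every closed subset of Spec_S R with respect to the S-Zariski topology is quasi-compact with respect to the S-flat topology. -/

import Mathlib

/-- An ideal `P` is `S`-prime if `P ∩ S = ∅` and there is `s ∈ S` such that
whenever `a * b ∈ P`, either `s * a ∈ P` or `s * b ∈ P`. -/
def IsSPrime {R : Type*} [CommRing R] (S : Set R) (P : Ideal R) : Prop :=
  (P : Set R) ∩ S = ∅ ∧ ∃ s ∈ S, ∀ a b : R, a * b ∈ P → s * a ∈ P ∨ s * b ∈ P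

/-- The `S`-prime spectrum `Spec_S R`: the set of all `S`-prime ideals of `R`. -/
def SSpec {R : Type*} [CommRing R] (S : Set R) : Type _ :=
  {P : Ideal R // IsSPrime S P}

/-- The `S`-variety of an ideal `I`:
`V_S(I) = {P ∈ Spec_S R | s • I ⊆ P for some s ∈ S}`. -/
def SVar {R : Type*} [CommRing R] (S : Set R) (I : Ideal R) : Set (SSpec S) :=
  {P | ∃ s ∈ S, ∀ x ∈ I, s * x ∈ P.1}

/-- The `S`-radical of an ideal `I`:
`√[S](I) = {a ∈ R | s * a ^ n ∈ I for some s ∈ S, n ∈ ℕ}`. -/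
def SRad {R : Type*} [CommRing R] (S : Set R) (I : Ideal R) : Set R :=
  {a | ∃ s ∈ S, ∃ n : ℕ, s * a ^ n ∈ I}

/-- The `S`-Zariski topology on `Spec_S R`: the closed sets are exactly the `V_S(I)`. -/
def sZariskiTop {R : Type*} [CommRing R] (S : Set R) : TopologicalSpace (SSpec S) :=
  TopologicalSpace.generateFrom {U | ∃ I : Ideal R, U = (SVar S I)ᶜ}

/-- The `S`-flat topology on `Spec_S R`: the coarsest topology in which every
`V_S(f)`, `f ∈ R`, is open. -/
def sFlatTop {R : Type*} [CommRing R] (S : Set R) : TopologicalSpace (SSpec S) :=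
  TopologicalSpace.generateFrom {U | ∃ f : R, U = SVar S (Ideal.span {f})}

/-- An ideal `I` is `S`-radically finite if `√[S](I) = √[S](J)` for some finitely
generated ideal `J`. -/
def SRadFinite {R : Type*} [CommRing R] (S : Set R) (I : Ideal R) : Prop :=
  ∃ J : Ideal R, J.FG ∧ SRad S I = SRad S J

/-- Membership in `V_S(span {f})` is witnessed on `f` itself. -/
lemma mem_sVar_span_singleton {R : Type*} [CommRing R] (S : Set R) (f : R) (P : SSpec S) :
    P ∈ SVar S (Ideal.span {f}) ↔ ∃ s ∈ S, s * f ∈ P.1 := by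
  constructor
  · rintro ⟨s, hs, h⟩
    exact ⟨s, hs, h f (Ideal.mem_span_singleton_self f)⟩
  · rintro ⟨s, hs, hsf⟩
    refine ⟨s, hs, fun x hx => ?_⟩
    obtain ⟨c, rfl⟩ := Ideal.mem_span_singleton'.mp hx
    have : s * (c * f) = c * (s * f) := by ring
    rw [this]
    exact Ideal.mul_mem_left _ c hsf

/-- Key combinatorial lemma: if `x * l.prod ∈ P` for an `S`-prime ideal `P`,
where `x ∈ S` and every element of `l` lies in `S ∪ 𝔉`, then some `f ∈ l` with
`f ∈ 𝔉` satisfies `s * f ∈ P` for some `s ∈ S`. -/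
lemma sPrime_list_lemma {R : Type*} [CommRing R] {S : Set R}
    (hSmul : ∀ s ∈ S, ∀ t ∈ S, s * t ∈ S) {𝔉 : Set R} {p : Ideal R} (hp : IsSPrime S p) :
    ∀ l : List R, (∀ a ∈ l, a ∈ S ∪ 𝔉) → ∀ x ∈ S, x * l.prod ∈ p →
      ∃ f ∈ l, f ∈ 𝔉 ∧ ∃ s ∈ S, s * f ∈ p := by
  obtain ⟨hdisj, sP, hsP, hprime⟩ := hp
  have hnot : ∀ y ∈ S, y ∉ p := fun y hyS hyp =>
    Set.eq_empty_iff_forall_notMem.mp hdisj y ⟨hyp, hyS⟩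
  intro l
  induction l with
  | nil =>
    intro _ x hx hxp
    rw [List.prod_nil, mul_one] at hxp
    exact absurd hxp (hnot x hx)
  | cons a l ih =>
    intro hmem x hx hxp
    rw [List.prod_cons] at hxp
    rcases hmem a (List.mem_cons_self) with haS | ha𝔉
    · have h1 : (x * a) * l.prod ∈ p := by rw [mul_assoc]; exact hxp
      rcases hprime (x * a) l.prod h1 with h2 | h2
      · exact absurd h2 (hnot _ (hSmul sP hsP _ (hSmul x hx a haS)))
      · obtain ⟨f, hfl, hf⟩ := ih (fun b hb => hmem b (List.mem_cons_of_mem a hb)) sP hsP h2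
        exact ⟨f, List.mem_cons_of_mem a hfl, hf⟩
    · have h1 : a * (x * l.prod) ∈ p := by rw [← mul_assoc, mul_comm a x, mul_assoc]; exact hxp
      rcases hprime a (x * l.prod) h1 with h2 | h2
      · exact ⟨a, List.mem_cons_self, ha𝔉, sP, hsP, h2⟩
      · have h3 : (sP * x) * l.prod ∈ p := by rw [mul_assoc]; exact h2
        obtain ⟨f, hfl, hf⟩ := ih (fun b hb => hmem b (List.mem_cons_of_mem a hb))
          (sP * x) (hSmul sP hsP x hx) h3
        exact ⟨f, List.mem_cons_of_mem a hfl, hf⟩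

/-- Every `V_S(I)` (i.e. every `S`-Zariski closed subset of `Spec_S R`) is quasi-compact
with respect to the `S`-flat topology. -/
theorem isCompact_sVar_sFlat {R : Type*} [CommRing R] [Nontrivial R] (S : Set R)
    (hS0 : (0 : R) ∉ S) (hS1 : (1 : R) ∈ S) (hSmul : ∀ s ∈ S, ∀ t ∈ S, s * t ∈ S)
    (I : Ideal R) :
    @IsCompact (SSpec S) (sFlatTop S) (SVar S I) := by
  classical
  letI : TopologicalSpace (SSpec S) := sFlatTop S
  rw [isCompact_iff_ultrafilter_le_nhds]
  intro 𝒰 h𝒰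
  have hI𝒰 : SVar S I ∈ 𝒰 := Filter.le_principal_iff.mp h𝒰
  set 𝔉 : Set R := {f | SVar S (Ideal.span {f}) ∉ 𝒰} with h𝔉
  set T : Submonoid R := Submonoid.closure (S ∪ 𝔉) with hT
  have hdisj : Disjoint (I : Set R) (T : Set R) := by
    rw [Set.disjoint_left]
    intro t htI htT
    obtain ⟨l, hl, hlprod⟩ := Submonoid.exists_list_of_mem_closure htT
    set fs : Finset R := l.toFinset.filter (fun f => SVar S (Ideal.span {f}) ∉ 𝒰) with hfs
    have hA : SVar S I ∩ ⋂ f ∈ fs, (SVar S (Ideal.span {f}))ᶜ ∈ 𝒰 := by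
      refine Filter.inter_mem hI𝒰 ((Filter.biInter_finset_mem fs).mpr fun f hf => ?_)
      exact Ultrafilter.compl_mem_iff_notMem.mpr (Finset.mem_filter.mp hf).2
    obtain ⟨P, hPI, hPcompl⟩ := Ultrafilter.nonempty_of_mem hA
    obtain ⟨s', hs', hs'I⟩ := hPI
    have hprod : s' * l.prod ∈ P.1 := by rw [hlprod]; exact hs'I t htI
    obtain ⟨f, hfl, hf𝔉, s, hs, hsf⟩ := sPrime_list_lemma hSmul P.2 l hl s' hs' hprod
    have hffs : f ∈ fs := Finset.mem_filter.mpr ⟨List.mem_toFinset.mpr hfl, hf𝔉⟩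
    have hPV : P ∈ SVar S (Ideal.span {f}) :=
      (mem_sVar_span_singleton S f P).mpr ⟨s, hs, hsf⟩
    exact Set.mem_iInter₂.mp hPcompl f hffs hPV
  obtain ⟨p, hpprime, hIp, hpT⟩ := Ideal.exists_le_prime_disjoint I T hdisj
  have hpS : IsSPrime S p := by
    constructor
    · rw [Set.eq_empty_iff_forall_notMem]
      rintro x ⟨hxp, hxS⟩
      exact Set.disjoint_left.mp hpT hxp (Submonoid.subset_closure (Or.inl hxS))
    · exact ⟨1, hS1, fun a b hab => by
        rw [one_mul, one_mul]; exact hpprime.mem_or_mem hab⟩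
  refine ⟨⟨p, hpS⟩, ⟨1, hS1, fun x hx => by rw [one_mul]; exact hIp hx⟩, ?_⟩
  show ↑𝒰 ≤ @nhds _ (TopologicalSpace.generateFrom
    {U | ∃ f : R, U = SVar S (Ideal.span {f})}) ⟨p, hpS⟩
  erw [TopologicalSpace.nhds_generateFrom]
  refine le_iInf fun U => le_iInf fun hU => ?_
  obtain ⟨hPU, f, rfl⟩ := hU
  rw [Filter.le_principal_iff]
  by_contra hnot
  obtain ⟨s, hs, hsf⟩ := (mem_sVar_span_singleton S f ⟨p, hpS⟩).mp hPU
  have hsfT : s * f ∈ T :=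
    Submonoid.mul_mem T (Submonoid.subset_closure (Or.inl hs))
      (Submonoid.subset_closure (Or.inr hnot))
  exact Set.disjoint_left.mp hpT hsf hsfT
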